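/- For all f, g ∈ C¹_poly(ℝⁿ) and every i ∈ {1,…,n}, the Gaussian integration-by-parts formula holds: ∫ f(x) ∂ᵢ g(x) dγ(x) = ∫ δᵢ f(x) g(x) dγ(x), where δᵢ f(x) = xᵢ f(x) − ∂ᵢ f(x) is the i-th divergence (Gaussian adjoint) operator. -/

import Mathlib

open MeasureTheory Real
open scoped RealInnerProductSpace BigOperators

noncomputable section

/-- The standard Gaussian measure on `ℝⁿ`, with density
`(2π)^(-n/2) exp(-|x|²/2)` with respect to Lebesgue measure. -/
def gaussianMeasure (n : ℕ) : Measure (EuclideanSpace ℝ (Fin n)) :=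
  volume.withDensity fun x => ENNReal.ofReal ((2 * π) ^ (-(n : ℝ) / 2) * Real.exp (-‖x‖ ^ 2 / 2))

/-- `C^k_poly(ℝⁿ)`: `C^k` functions which, together with all derivatives up to
order `k`, are bounded by a polynomial. -/
def CPoly (k n : ℕ) (f : EuclideanSpace ℝ (Fin n) → ℝ) : Prop :=
  ContDiff ℝ k f ∧
    ∀ i, i ≤ k → ∃ (C : ℝ) (m : ℕ), ∀ x, ‖iteratedFDeriv ℝ i f x‖ ≤ C * (1 + ‖x‖) ^ m

/-- The `i`-th partial derivative. -/
def partialDeriv {n : ℕ} (i : Fin n) (f : EuclideanSpace ℝ (Fin n) → ℝ)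
    (x : EuclideanSpace ℝ (Fin n)) : ℝ :=
  fderiv ℝ f x (EuclideanSpace.single i 1)

/-- The Laplacian. -/
def laplacian {n : ℕ} (f : EuclideanSpace ℝ (Fin n) → ℝ) (x : EuclideanSpace ℝ (Fin n)) : ℝ :=
  ∑ i : Fin n, partialDeriv i (partialDeriv i f) x

/-- The Ornstein–Uhlenbeck operator `δ·∇ f (x) = x·∇f(x) − Δf(x)`. -/
def ouOperator {n : ℕ} (f : EuclideanSpace ℝ (Fin n) → ℝ) (x : EuclideanSpace ℝ (Fin n)) : ℝ :=
  ⟪x, gradient f x⟫ - laplacian f x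

/-- The Ornstein–Uhlenbeck semigroup given by the Mehler formula. -/
def ouSemigroup (n : ℕ) (t : ℝ) (f : EuclideanSpace ℝ (Fin n) → ℝ)
    (x : EuclideanSpace ℝ (Fin n)) : ℝ :=
  ∫ y, f (Real.exp (-t) • x + Real.sqrt (1 - Real.exp (-2 * t)) • y) ∂gaussianMeasure n

/-- A Young function: the primitive of a continuous, strictly increasing function
`φ` with `φ(0) = 0` and `φ(u) → ∞`. -/
def IsYoung (Φ : ℝ → ℝ) : Prop :=
  ∃ φ : ℝ → ℝ, ContinuousOn φ (Set.Ici 0) ∧ StrictMonoOn φ (Set.Ici 0) ∧ φ 0 = 0 ∧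
    Filter.Tendsto φ Filter.atTop Filter.atTop ∧
    ∀ x, 0 ≤ x → Φ x = ∫ u in (0:ℝ)..x, φ u

/-- The Luxemburg norm of `f` in the Orlicz space `L_Φ(γ)` over the Gaussian space. -/
def luxNorm (n : ℕ) (Φ : ℝ → ℝ) (f : EuclideanSpace ℝ (Fin n) → ℝ) : ℝ :=
  sInf {α : ℝ | 0 < α ∧ ∫ x, Φ (|f x| / α) ∂gaussianMeasure n ≤ 1}

end

namespace GaussianIBPAux

open Filter
open scoped ENNReal NNReal

/-- 1D: the integral of the derivative of a function vanishing at `±∞` is zero. -/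
lemma intA (H H' : ℝ → ℝ) (hd : ∀ t, HasDerivAt H (H' t) t) (hi : Integrable H')
    (htop : Tendsto H atTop (nhds 0)) (hbot : Tendsto H atBot (nhds 0)) :
    ∫ t, H' t = 0 := by
  have h1 : Tendsto (fun R : ℝ => ∫ t in (-R)..R, H' t) atTop (nhds (∫ t, H' t)) :=
    intervalIntegral_tendsto_integral hi tendsto_neg_atTop_atBot tendsto_id
  have h2 : ∀ R : ℝ, (∫ t in (-R)..R, H' t) = H R - H (-R) := fun R =>
    intervalIntegral.integral_eq_sub_of_hasDerivAt (fun t _ => hd t) (hi.intervalIntegrable)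
  simp_rw [h2] at h1
  have h3 : Tendsto (fun R : ℝ => H R - H (-R)) atTop (nhds 0) := by
    simpa using htop.sub (hbot.comp tendsto_neg_atTop_atBot)
  exact tendsto_nhds_unique h1 h3

lemma keybound (m : ℕ) (s : ℝ) (hs : 0 ≤ s) :
    (1 + s) ^ m * Real.exp (-s ^ 2 / 2) ≤ Real.exp ((m : ℝ) ^ 2) * Real.exp (-(1/4) * s ^ 2) := by
  have h1 : (1 + s) ^ m ≤ Real.exp ((m : ℝ) * s) := by
    calc (1 + s) ^ m ≤ (Real.exp s) ^ m :=
          pow_le_pow_left₀ (by linarith) (by linarith [Real.add_one_le_exp s]) m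
      _ = Real.exp ((m : ℝ) * s) := by rw [← Real.exp_nat_mul]
  calc (1 + s) ^ m * Real.exp (-s ^ 2 / 2) ≤ Real.exp ((m:ℝ) * s) * Real.exp (-s ^ 2 / 2) := by
        apply mul_le_mul_of_nonneg_right h1 (Real.exp_nonneg _)
    _ = Real.exp ((m:ℝ) * s + -s^2/2) := by rw [← Real.exp_add]
    _ ≤ Real.exp ((m:ℝ)^2 + -(1/4) * s^2) := by
        apply Real.exp_le_exp.2; nlinarith [sq_nonneg (s/2 - (m:ℝ)), sq_nonneg s]
    _ = _ := by rw [Real.exp_add]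

lemma intG {n : ℕ} {b : ℝ} (hb : 0 < b) :
    Integrable (fun x : EuclideanSpace ℝ (Fin n) => Real.exp (-b * ‖x‖ ^ 2)) := by
  have h := (GaussianFourier.integrable_cexp_neg_mul_sq_norm_add
      (V := EuclideanSpace ℝ (Fin n)) (b := (b : ℂ)) (by simpa using hb) 0 0).norm
  refine h.congr (Filter.Eventually.of_forall fun v => ?_)
  simp [Complex.norm_exp]
  exact Or.inl (by norm_cast)

lemma intPG {n : ℕ} {F : EuclideanSpace ℝ (Fin n) → ℝ} (hF : Continuous F) (C : ℝ) (m : ℕ)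
    (hb : ∀ x, |F x| ≤ C * (1 + ‖x‖) ^ m * Real.exp (-‖x‖ ^ 2 / 2)) :
    Integrable F := by
  have hC : 0 ≤ C := by
    have := (abs_nonneg (F 0)).trans (hb 0)
    simpa using this
  have hG : Integrable (fun x : EuclideanSpace ℝ (Fin n) =>
      (C * Real.exp ((m:ℝ)^2)) * Real.exp (-(1/4) * ‖x‖ ^ 2)) :=
    (intG (by norm_num)).const_mul _
  refine hG.mono' hF.aestronglyMeasurable (Filter.Eventually.of_forall fun x => ?_)
  calc ‖F x‖ ≤ C * (1 + ‖x‖) ^ m * Real.exp (-‖x‖ ^ 2 / 2) := hb x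
    _ = C * ((1 + ‖x‖) ^ m * Real.exp (-‖x‖ ^ 2 / 2)) := by ring
    _ ≤ C * (Real.exp ((m:ℝ)^2) * Real.exp (-(1/4) * ‖x‖^2)) :=
        mul_le_mul_of_nonneg_left (keybound m ‖x‖ (norm_nonneg x)) hC
    _ = (C * Real.exp ((m:ℝ)^2)) * Real.exp (-(1/4) * ‖x‖ ^ 2) := by ring

lemma squeezeG {f r : ℝ → ℝ} {l : Filter ℝ} (K : ℝ)
    (hb : ∀ t, |f t| ≤ K * Real.exp (-(r t) ^ 2 / 4)) (hr : Tendsto r l atTop) :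
    Tendsto f l (nhds 0) := by
  have h1 : Tendsto (fun t => K * Real.exp (-(r t) ^ 2 / 4)) l (nhds 0) := by
    have h2 : Tendsto (fun t => -(r t) ^ 2 / 4) l atBot := by
      apply Tendsto.atBot_div_const (by norm_num)
      exact tendsto_neg_atBot_iff.2 ((tendsto_pow_atTop two_ne_zero).comp hr)
    simpa using (Real.tendsto_exp_atBot.comp h2).const_mul K
  exact squeeze_zero_norm hb h1

lemma intZ {n : ℕ} (i : Fin n) (H : EuclideanSpace ℝ (Fin n) → ℝ)
    (D : EuclideanSpace ℝ (Fin n) → (EuclideanSpace ℝ (Fin n) →L[ℝ] ℝ))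
    (hd : ∀ x, HasFDerivAt H (D x) x)
    (hi : Integrable (fun x => D x (EuclideanSpace.single i 1)))
    (htop : ∀ x, Tendsto (fun t : ℝ => H (x + t • EuclideanSpace.single i (1:ℝ))) atTop (nhds 0))
    (hbot : ∀ x, Tendsto (fun t : ℝ => H (x + t • EuclideanSpace.single i (1:ℝ))) atBot (nhds 0)) :
    ∫ x, D x (EuclideanSpace.single i 1) = 0 := by
  obtain ⟨m, rfl⟩ : ∃ m, n = m + 1 := ⟨n - 1, by have := i.pos; omega⟩
  set s : EuclideanSpace ℝ (Fin (m+1)) := EuclideanSpace.single i 1 with hs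
  set e := (MeasurableEquiv.toLp 2 (Fin (m+1) → ℝ)).symm with he
  set p := MeasurableEquiv.piFinSuccAbove (fun _ : Fin (m+1) => ℝ) i with hp
  set Φ : ℝ × (Fin m → ℝ) → EuclideanSpace ℝ (Fin (m+1)) := fun z => e.symm (p.symm z) with hΦ
  have hmp : MeasurePreserving Φ (volume.prod volume) volume :=
    ((EuclideanSpace.volume_preserving_symm_measurableEquiv_toLp (Fin (m+1))).symm).comp
      ((volume_preserving_piFinSuccAbove (fun _ : Fin (m+1) => ℝ) i).symm)
  have emb : MeasurableEmbedding Φ :=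
    (e.symm.measurableEmbedding).comp (p.symm.measurableEmbedding)
  have key : ∀ (t : ℝ) (y : Fin m → ℝ), Φ (t, y) = Φ (0, y) + t • s := by
    intro t y
    refine PiLp.ext fun j => ?_
    by_cases hj : j = i
    · subst hj
      simp [hΦ, he, hp, MeasurableEquiv.coe_toLp, PiLp.add_apply, PiLp.smul_apply,
        hs, EuclideanSpace.single_apply]
    · obtain ⟨k, rfl⟩ := Fin.exists_succAbove_eq hj
      simp [hΦ, he, hp, MeasurableEquiv.coe_toLp, PiLp.add_apply, PiLp.smul_apply,
        hs, EuclideanSpace.single_apply, Fin.succAbove_ne i k]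
  have hiΦ : Integrable (fun z => D (Φ z) s) (volume.prod volume) := by
    have := (hmp.integrable_comp_emb emb).2 hi
    simpa [Function.comp_def] using this
  have step1 : ∫ x, D x s = ∫ z, D (Φ z) s ∂(volume.prod volume) := by
    rw [← hmp.integral_comp emb]
  rw [step1, MeasureTheory.integral_prod_symm _ hiΦ]
  have hae := hiΦ.prod_left_ae
  have main : ∀ᵐ y : Fin m → ℝ, (∫ t : ℝ, D (Φ (t, y)) s) = 0 := by
    filter_upwards [hae] with y hy
    have hy' : Integrable (fun t : ℝ => D (Φ (0, y) + t • s) s) :=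
      hy.congr (Filter.Eventually.of_forall fun t => by
        show (D (Φ (t, y))) s = (D (Φ (0, y) + t • s)) s
        rw [key])
    have hline : ∀ t : ℝ, HasDerivAt (fun t : ℝ => H (Φ (0, y) + t • s))
        (D (Φ (0, y) + t • s) s) t := by
      intro t
      have h1 : HasDerivAt (fun t : ℝ => Φ (0, y) + t • s) s t := by
        simpa using ((hasDerivAt_id t).smul_const s).const_add (Φ (0, y))
      exact (hd _).comp_hasDerivAt t h1
    have h0 := intA _ _ hline hy' (htop (Φ (0, y))) (hbot (Φ (0, y)))
    calc (∫ t : ℝ, D (Φ (t, y)) s) = ∫ t : ℝ, D (Φ (0, y) + t • s) s := by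
          congr 1; funext t; rw [key]
      _ = 0 := h0
  rw [integral_congr_ae main, integral_zero]

lemma rho_hasFDeriv {n : ℕ} (x : EuclideanSpace ℝ (Fin n)) :
    HasFDerivAt (fun y : EuclideanSpace ℝ (Fin n) => Real.exp (-‖y‖ ^ 2 / 2))
      (Real.exp (-‖x‖ ^ 2 / 2) • (-(innerSL ℝ x))) x := by
  have h1 : HasFDerivAt (fun y : EuclideanSpace ℝ (Fin n) => -‖y‖ ^ 2 / 2)
      (-(innerSL ℝ x)) x := by
    have h2 := (hasStrictFDerivAt_norm_sq x).hasFDerivAt.const_smul (-(1/2) : ℝ)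
    have hfun : (fun y : EuclideanSpace ℝ (Fin n) => -‖y‖ ^ 2 / 2) =
        fun y : EuclideanSpace ℝ (Fin n) => (-(1/2) : ℝ) • ‖y‖ ^ 2 := by
      funext y; simp; ring
    rw [hfun]
    refine h2.congr_fderiv ?_
    ext y
    simp [two_smul]
    ring
  exact h1.exp

lemma abs_apply_le {n : ℕ} (x : EuclideanSpace ℝ (Fin n)) (i : Fin n) : |x i| ≤ ‖x‖ := by
  have := abs_real_inner_le_norm x (EuclideanSpace.single i (1:ℝ))
  simpa [EuclideanSpace.inner_single_right] using this

/-- The core volume-level statement. -/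
lemma M' {n : ℕ} (h : EuclideanSpace ℝ (Fin n) → ℝ) (hh : ContDiff ℝ 1 h)
    (C : ℝ) (m : ℕ) (hb0 : ∀ x, |h x| ≤ C * (1 + ‖x‖) ^ m)
    (hb1 : ∀ x, ‖fderiv ℝ h x‖ ≤ C * (1 + ‖x‖) ^ m) (i : Fin n) :
    (∫ x, partialDeriv i h x * Real.exp (-‖x‖ ^ 2 / 2)) =
      ∫ x, x i * h x * Real.exp (-‖x‖ ^ 2 / 2) := by
  have hC : 0 ≤ C := by simpa using (abs_nonneg (h 0)).trans (hb0 0)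
  set ρ : EuclideanSpace ℝ (Fin n) → ℝ := fun x => Real.exp (-‖x‖ ^ 2 / 2) with hρ
  have hρpos : ∀ x, 0 < ρ x := fun x => Real.exp_pos _
  set D : EuclideanSpace ℝ (Fin n) → (EuclideanSpace ℝ (Fin n) →L[ℝ] ℝ) :=
    fun x => h x • (ρ x • (-(innerSL ℝ x))) + ρ x • fderiv ℝ h x with hD
  have hder : ∀ x, HasFDerivAt (fun y => h y * ρ y) (D x) x := fun x =>
    ((hh.differentiable one_ne_zero x).hasFDerivAt).mul (rho_hasFDeriv x)
  have hDeval : ∀ x, D x (EuclideanSpace.single i 1) =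
      (partialDeriv i h x - x i * h x) * ρ x := by
    intro x
    simp [hD, partialDeriv, EuclideanSpace.inner_single_right]
    ring
  -- continuity facts
  have hcρ : Continuous ρ := Real.continuous_exp.comp ((continuous_norm.pow 2).neg.div_const 2)
  have hcpd : Continuous (fun x => partialDeriv i h x) :=
    (hh.continuous_fderiv one_ne_zero).clm_apply continuous_const
  have hch : Continuous h := hh.continuous
  have hcxi : Continuous (fun x : EuclideanSpace ℝ (Fin n) => x i) := by
    exact (EuclideanSpace.proj (𝕜 := ℝ) i).continuous
  -- integrability facts
  have hpd_bound : ∀ x, |partialDeriv i h x| ≤ C * (1 + ‖x‖) ^ m := by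
    intro x
    calc |partialDeriv i h x| = ‖fderiv ℝ h x (EuclideanSpace.single i (1:ℝ))‖ := rfl
      _ ≤ ‖fderiv ℝ h x‖ * ‖EuclideanSpace.single i (1:ℝ)‖ :=
          (fderiv ℝ h x).le_opNorm _
      _ = ‖fderiv ℝ h x‖ := by simp
      _ ≤ C * (1 + ‖x‖) ^ m := hb1 x
  have I1 : Integrable (fun x => partialDeriv i h x * ρ x) := by
    refine intPG (hcpd.mul hcρ) C m (fun x => ?_)
    rw [abs_mul, abs_of_pos (hρpos x)]
    exact mul_le_mul_of_nonneg_right (hpd_bound x) (hρpos x).le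
  have I2 : Integrable (fun x => x i * h x * ρ x) := by
    refine intPG ((hcxi.mul hch).mul hcρ) C (m+1) (fun x => ?_)
    rw [abs_mul, abs_of_pos (hρpos x)]
    refine mul_le_mul_of_nonneg_right ?_ (hρpos x).le
    rw [abs_mul]
    calc |x i| * |h x| ≤ (1 + ‖x‖) * (C * (1 + ‖x‖) ^ m) := by
          refine mul_le_mul ?_ (hb0 x) (abs_nonneg _) (by positivity)
          linarith [abs_apply_le x i]
      _ = C * (1 + ‖x‖) ^ (m + 1) := by ring
  have Isub : Integrable (fun x => (partialDeriv i h x - x i * h x) * ρ x) :=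
    (I1.sub I2).congr (Filter.Eventually.of_forall fun x => by simp only [Pi.sub_apply]; ring)
  have hint : Integrable (fun x => D x (EuclideanSpace.single i 1)) :=
    Isub.congr (Filter.Eventually.of_forall fun x => (hDeval x).symm)
  -- decay of H along lines
  have hHbound : ∀ y, |h y * ρ y| ≤ (C * Real.exp ((m:ℝ)^2)) * Real.exp (-‖y‖ ^ 2 / 4) := by
    intro y
    rw [abs_mul, abs_of_pos (hρpos y)]
    calc |h y| * ρ y ≤ (C * (1 + ‖y‖) ^ m) * ρ y :=
          mul_le_mul_of_nonneg_right (hb0 y) (hρpos y).le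
      _ = C * ((1 + ‖y‖) ^ m * Real.exp (-‖y‖ ^ 2 / 2)) := by rw [hρ]; ring
      _ ≤ C * (Real.exp ((m:ℝ)^2) * Real.exp (-(1/4) * ‖y‖ ^ 2)) :=
          mul_le_mul_of_nonneg_left (keybound m ‖y‖ (norm_nonneg y)) hC
      _ = (C * Real.exp ((m:ℝ)^2)) * Real.exp (-‖y‖ ^ 2 / 4) := by
          rw [show -(1/4) * ‖y‖ ^ 2 = -‖y‖ ^ 2 / 4 by ring]; ring
  have hlinebound : ∀ (x₀ : EuclideanSpace ℝ (Fin n)) (t : ℝ),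
      |h (x₀ + t • EuclideanSpace.single i (1:ℝ)) * ρ (x₀ + t • EuclideanSpace.single i (1:ℝ))|
        ≤ (C * Real.exp ((m:ℝ)^2)) *
          Real.exp (-(max (|t| - ‖x₀‖) 0) ^ 2 / 4) := by
    intro x₀ t
    set y := x₀ + t • EuclideanSpace.single i (1:ℝ) with hy
    have hr1 : max (|t| - ‖x₀‖) 0 ≤ ‖y‖ := by
      refine max_le ?_ (norm_nonneg _)
      have h1 : ‖t • EuclideanSpace.single i (1:ℝ)‖ ≤ ‖y‖ + ‖x₀‖ := by
        calc ‖t • EuclideanSpace.single i (1:ℝ)‖ = ‖y - x₀‖ := by rw [hy]; congr 1; abel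
          _ ≤ ‖y‖ + ‖x₀‖ := norm_sub_le _ _
      have h2 : ‖t • EuclideanSpace.single i (1:ℝ)‖ = |t| := by
        simp [norm_smul]
      linarith
    refine (hHbound y).trans ?_
    refine mul_le_mul_of_nonneg_left ?_ (by positivity)
    apply Real.exp_le_exp.2
    have : (max (|t| - ‖x₀‖) 0) ^ 2 ≤ ‖y‖ ^ 2 :=
      pow_le_pow_left₀ (le_max_right _ _) hr1 2
    linarith
  have htop : ∀ x₀, Tendsto
      (fun t : ℝ => h (x₀ + t • EuclideanSpace.single i (1:ℝ)) *
        ρ (x₀ + t • EuclideanSpace.single i (1:ℝ))) atTop (nhds 0) := by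
    intro x₀
    refine squeezeG (C * Real.exp ((m:ℝ)^2)) (hlinebound x₀) ?_
    refine tendsto_atTop_mono (fun t => le_max_left _ _) ?_
    have : Tendsto (fun t : ℝ => |t| + -‖x₀‖) atTop atTop :=
      tendsto_atTop_add_const_right _ _ tendsto_abs_atTop_atTop
    simpa [sub_eq_add_neg] using this
  have hbot : ∀ x₀, Tendsto
      (fun t : ℝ => h (x₀ + t • EuclideanSpace.single i (1:ℝ)) *
        ρ (x₀ + t • EuclideanSpace.single i (1:ℝ))) atBot (nhds 0) := by
    intro x₀
    refine squeezeG (C * Real.exp ((m:ℝ)^2)) (hlinebound x₀) ?_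
    refine tendsto_atTop_mono (fun t => le_max_left _ _) ?_
    have : Tendsto (fun t : ℝ => |t| + -‖x₀‖) atBot atTop :=
      tendsto_atTop_add_const_right _ _ tendsto_abs_atBot_atTop
    simpa [sub_eq_add_neg] using this
  have hzero : (∫ x, D x (EuclideanSpace.single i 1)) = 0 :=
    intZ i (fun y => h y * ρ y) D hder hint htop hbot
  have hzero' : (∫ x, (partialDeriv i h x - x i * h x) * ρ x) = 0 := by
    calc (∫ x, (partialDeriv i h x - x i * h x) * ρ x)
        = ∫ x, D x (EuclideanSpace.single i 1) := by
          congr 1; funext x; rw [hDeval]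
      _ = 0 := hzero
  have hsplit : (∫ x, partialDeriv i h x * ρ x) - (∫ x, x i * h x * ρ x) = 0 := by
    rw [← integral_sub I1 I2]
    calc (∫ x, (partialDeriv i h x * ρ x - x i * h x * ρ x))
        = ∫ x, (partialDeriv i h x - x i * h x) * ρ x := by congr 1; funext x; ring
      _ = 0 := hzero'
  linarith

lemma pd_abs_le {n : ℕ} (i : Fin n) (u : EuclideanSpace ℝ (Fin n) → ℝ) (x) :
    |partialDeriv i u x| ≤ ‖fderiv ℝ u x‖ := by
  calc |partialDeriv i u x| = ‖fderiv ℝ u x (EuclideanSpace.single i (1:ℝ))‖ := rfl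
    _ ≤ ‖fderiv ℝ u x‖ * ‖EuclideanSpace.single i (1:ℝ)‖ := (fderiv ℝ u x).le_opNorm _
    _ = ‖fderiv ℝ u x‖ := by simp

lemma cpoly_bounds {n : ℕ} {u : EuclideanSpace ℝ (Fin n) → ℝ} (hu : CPoly 1 n u) :
    ∃ (C : ℝ) (m : ℕ), 0 ≤ C ∧
      ∀ x, |u x| ≤ C * (1 + ‖x‖) ^ m ∧ ‖fderiv ℝ u x‖ ≤ C * (1 + ‖x‖) ^ m := by
  obtain ⟨C0, m0, h0⟩ := hu.2 0 (by norm_num)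
  obtain ⟨C1, m1, h1⟩ := hu.2 1 le_rfl
  refine ⟨max (max C0 C1) 0, max m0 m1, le_max_right _ _, fun x => ?_⟩
  have hx1 : (1:ℝ) ≤ 1 + ‖x‖ := by linarith [norm_nonneg x]
  have hp0 : (1 + ‖x‖) ^ m0 ≤ (1 + ‖x‖) ^ (max m0 m1) :=
    pow_le_pow_right₀ hx1 (le_max_left _ _)
  have hp1 : (1 + ‖x‖) ^ m1 ≤ (1 + ‖x‖) ^ (max m0 m1) :=
    pow_le_pow_right₀ hx1 (le_max_right _ _)
  have hpnn : (0:ℝ) ≤ (1 + ‖x‖) ^ m0 := by positivity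
  have hpnn1 : (0:ℝ) ≤ (1 + ‖x‖) ^ m1 := by positivity
  have hC0 : C0 ≤ max (max C0 C1) 0 := le_max_of_le_left (le_max_left _ _)
  have hC1 : C1 ≤ max (max C0 C1) 0 := le_max_of_le_left (le_max_right _ _)
  have hCnn : (0:ℝ) ≤ max (max C0 C1) 0 := le_max_right _ _
  constructor
  · have := h0 x
    rw [norm_iteratedFDeriv_zero, Real.norm_eq_abs] at this
    calc |u x| ≤ C0 * (1 + ‖x‖) ^ m0 := this
      _ ≤ max (max C0 C1) 0 * (1 + ‖x‖) ^ (max m0 m1) := by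
          apply mul_le_mul hC0 hp0 hpnn hCnn
  · have := h1 x
    have heq : ‖fderiv ℝ u x‖ = ‖iteratedFDeriv ℝ 1 u x‖ := by
      rw [← norm_iteratedFDeriv_fderiv (n := 0), norm_iteratedFDeriv_zero]
    rw [← heq] at this
    calc ‖fderiv ℝ u x‖ ≤ C1 * (1 + ‖x‖) ^ m1 := this
      _ ≤ max (max C0 C1) 0 * (1 + ‖x‖) ^ (max m0 m1) := by
          apply mul_le_mul hC1 hp1 hpnn1 hCnn

lemma gauss_int {n : ℕ} (G : EuclideanSpace ℝ (Fin n) → ℝ) :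
    (∫ x, G x ∂gaussianMeasure n)
      = ∫ x, ((2 * π) ^ (-(n:ℝ) / 2) * Real.exp (-‖x‖ ^ 2 / 2)) * G x := by
  rw [gaussianMeasure]
  have hmeas : Measurable fun x : EuclideanSpace ℝ (Fin n) =>
      ((2 * π) ^ (-(n:ℝ)/2) * Real.exp (-‖x‖^2/2)).toNNReal := by
    apply Measurable.real_toNNReal
    exact (continuous_const.mul
      (Real.continuous_exp.comp ((continuous_norm.pow 2).neg.div_const 2))).measurable
  rw [show (fun x : EuclideanSpace ℝ (Fin n) =>
      ENNReal.ofReal ((2 * π) ^ (-(n:ℝ)/2) * Real.exp (-‖x‖^2/2)))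
      = fun x : EuclideanSpace ℝ (Fin n) =>
        (((2 * π) ^ (-(n:ℝ)/2) * Real.exp (-‖x‖^2/2)).toNNReal : ℝ≥0∞) from rfl]
  rw [integral_withDensity_eq_integral_smul hmeas G]
  congr 1; funext x
  rw [NNReal.smul_def, Real.coe_toNNReal _ (by positivity), smul_eq_mul]

end GaussianIBPAux

/-- Gaussian integration by parts:
`∫ f ∂ᵢg dγ = ∫ (δᵢf) g dγ` with `δᵢ f(x) = xᵢ f(x) − ∂ᵢ f(x)`. -/
theorem gaussian_integration_by_parts (n : ℕ) (f g : EuclideanSpace ℝ (Fin n) → ℝ)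
    (hf : CPoly 1 n f) (hg : CPoly 1 n g) (i : Fin n) :
    ∫ x, f x * partialDeriv i g x ∂gaussianMeasure n =
      ∫ x, (x i * f x - partialDeriv i f x) * g x ∂gaussianMeasure n := by
  classical
  open GaussianIBPAux in
  obtain ⟨Cf, mf, hCf, hfb⟩ := GaussianIBPAux.cpoly_bounds hf
  obtain ⟨Cg, mg, hCg, hgb⟩ := GaussianIBPAux.cpoly_bounds hg
  set ρ : EuclideanSpace ℝ (Fin n) → ℝ := fun x => Real.exp (-‖x‖ ^ 2 / 2) with hρ
  have hρpos : ∀ x, 0 < ρ x := fun x => Real.exp_pos _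
  set c : ℝ := (2 * π) ^ (-(n:ℝ) / 2) with hc
  have hcpos : 0 < c := Real.rpow_pos_of_pos (by positivity) _
  rw [GaussianIBPAux.gauss_int, GaussianIBPAux.gauss_int]
  change (∫ x, c * ρ x * (f x * partialDeriv i g x))
    = ∫ x, c * ρ x * ((x i * f x - partialDeriv i f x) * g x)
  have hre1 : ∀ x : EuclideanSpace ℝ (Fin n),
      (c * ρ x) * (f x * partialDeriv i g x) = c * (f x * partialDeriv i g x * ρ x) := by
    intro x; ring
  have hre2 : ∀ x : EuclideanSpace ℝ (Fin n),
      (c * ρ x) * ((x i * f x - partialDeriv i f x) * g x)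
        = c * ((x i * f x - partialDeriv i f x) * g x * ρ x) := by
    intro x; ring
  simp_rw [hre1, hre2, MeasureTheory.integral_const_mul]
  congr 1
  -- now at the volume level
  have hdf : Differentiable ℝ f := hf.1.differentiable one_ne_zero
  have hdg : Differentiable ℝ g := hg.1.differentiable one_ne_zero
  -- continuity
  have hcf : Continuous f := hf.1.continuous
  have hcg : Continuous g := hg.1.continuous
  have hcdf : Continuous (fun x => partialDeriv i f x) :=
    (hf.1.continuous_fderiv one_ne_zero).clm_apply continuous_const
  have hcdg : Continuous (fun x => partialDeriv i g x) :=
    (hg.1.continuous_fderiv one_ne_zero).clm_apply continuous_const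
  have hcρ : Continuous ρ := Real.continuous_exp.comp ((continuous_norm.pow 2).neg.div_const 2)
  have hcxi : Continuous (fun x : EuclideanSpace ℝ (Fin n) => x i) := (EuclideanSpace.proj (𝕜 := ℝ) i).continuous
  -- integrability
  have J1 : Integrable (fun x => f x * partialDeriv i g x * ρ x) := by
    refine GaussianIBPAux.intPG ((hcf.mul hcdg).mul hcρ) (Cf * Cg) (mf + mg) (fun x => ?_)
    rw [abs_mul, abs_of_pos (hρpos x)]
    refine mul_le_mul_of_nonneg_right ?_ (hρpos x).le
    rw [abs_mul, pow_add]
    have h2 : |partialDeriv i g x| ≤ Cg * (1 + ‖x‖) ^ mg :=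
      (GaussianIBPAux.pd_abs_le i g x).trans (hgb x).2
    calc |f x| * |partialDeriv i g x|
        ≤ (Cf * (1 + ‖x‖) ^ mf) * (Cg * (1 + ‖x‖) ^ mg) :=
          mul_le_mul (hfb x).1 h2 (abs_nonneg _) (by positivity)
      _ = Cf * Cg * ((1 + ‖x‖) ^ mf * (1 + ‖x‖) ^ mg) := by ring
  have J3 : Integrable (fun x => partialDeriv i f x * g x * ρ x) := by
    refine GaussianIBPAux.intPG ((hcdf.mul hcg).mul hcρ) (Cf * Cg) (mf + mg) (fun x => ?_)
    rw [abs_mul, abs_of_pos (hρpos x)]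
    refine mul_le_mul_of_nonneg_right ?_ (hρpos x).le
    rw [abs_mul, pow_add]
    have h2 : |partialDeriv i f x| ≤ Cf * (1 + ‖x‖) ^ mf :=
      (GaussianIBPAux.pd_abs_le i f x).trans (hfb x).2
    calc |partialDeriv i f x| * |g x|
        ≤ (Cf * (1 + ‖x‖) ^ mf) * (Cg * (1 + ‖x‖) ^ mg) :=
          mul_le_mul h2 (hgb x).1 (abs_nonneg _) (by positivity)
      _ = Cf * Cg * ((1 + ‖x‖) ^ mf * (1 + ‖x‖) ^ mg) := by ring
  have J2 : Integrable (fun x => x i * (f x * g x) * ρ x) := by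
    refine GaussianIBPAux.intPG ((hcxi.mul (hcf.mul hcg)).mul hcρ)
      (Cf * Cg) (mf + mg + 1) (fun x => ?_)
    rw [abs_mul, abs_of_pos (hρpos x)]
    refine mul_le_mul_of_nonneg_right ?_ (hρpos x).le
    rw [abs_mul, abs_mul]
    have hxi : |x i| ≤ 1 + ‖x‖ := by linarith [GaussianIBPAux.abs_apply_le x i]
    calc |x i| * (|f x| * |g x|)
        ≤ (1 + ‖x‖) * ((Cf * (1 + ‖x‖) ^ mf) * (Cg * (1 + ‖x‖) ^ mg)) := by
          refine mul_le_mul hxi ?_ (by positivity) (by positivity)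
          exact mul_le_mul (hfb x).1 (hgb x).1 (abs_nonneg _) (by positivity)
      _ = Cf * Cg * (1 + ‖x‖) ^ (mf + mg + 1) := by rw [pow_add, pow_add]; ring
  -- product rule
  have hpdmul : ∀ x, partialDeriv i (fun y => f y * g y) x
      = f x * partialDeriv i g x + g x * partialDeriv i f x := by
    intro x
    unfold partialDeriv
    rw [fderiv_fun_mul (hdf x) (hdg x)]
    simp
  -- apply the main lemma to h = f * g
  have hM := GaussianIBPAux.M' (fun y => f y * g y) (hf.1.mul hg.1)
      (2 * (Cf * Cg)) (mf + mg) ?_ ?_ i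
  · -- conclude
    have e1 : (∫ x, partialDeriv i (fun y => f y * g y) x * ρ x)
        = (∫ x, f x * partialDeriv i g x * ρ x) + ∫ x, partialDeriv i f x * g x * ρ x := by
      rw [← MeasureTheory.integral_add J1 J3]
      congr 1; funext x; rw [hpdmul]; ring
    have e2 : (∫ x, x i * (fun y => f y * g y) x * ρ x)
        = ∫ x, x i * (f x * g x) * ρ x := by rfl
    have e3 : (∫ x, (x i * f x - partialDeriv i f x) * g x * ρ x)
        = (∫ x, x i * (f x * g x) * ρ x) - ∫ x, partialDeriv i f x * g x * ρ x := by
      rw [← MeasureTheory.integral_sub J2 J3]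
      congr 1; funext x; ring
    rw [e3]
    rw [hM, e2] at e1
    linarith [e1]
  · intro x
    rw [abs_mul]
    calc |f x| * |g x| ≤ (Cf * (1 + ‖x‖) ^ mf) * (Cg * (1 + ‖x‖) ^ mg) :=
          mul_le_mul (hfb x).1 (hgb x).1 (abs_nonneg _) (by positivity)
      _ ≤ 2 * (Cf * Cg) * (1 + ‖x‖) ^ (mf + mg) := by rw [pow_add]; nlinarith [pow_nonneg (by linarith [norm_nonneg x] : (0:ℝ) ≤ 1 + ‖x‖) mf, pow_nonneg (by linarith [norm_nonneg x] : (0:ℝ) ≤ 1 + ‖x‖) mg, mul_nonneg hCf hCg, mul_nonneg (mul_nonneg hCf (pow_nonneg (by linarith [norm_nonneg x] : (0:ℝ) ≤ 1 + ‖x‖) mf)) (mul_nonneg hCg (pow_nonneg (by linarith [norm_nonneg x] : (0:ℝ) ≤ 1 + ‖x‖) mg))]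
  · intro x
    rw [fderiv_fun_mul (hdf x) (hdg x)]
    calc ‖f x • fderiv ℝ g x + g x • fderiv ℝ f x‖
        ≤ ‖f x • fderiv ℝ g x‖ + ‖g x • fderiv ℝ f x‖ := norm_add_le _ _
      _ = |f x| * ‖fderiv ℝ g x‖ + |g x| * ‖fderiv ℝ f x‖ := by
          rw [norm_smul, norm_smul, Real.norm_eq_abs, Real.norm_eq_abs]
      _ ≤ (Cf * (1 + ‖x‖) ^ mf) * (Cg * (1 + ‖x‖) ^ mg)
          + (Cg * (1 + ‖x‖) ^ mg) * (Cf * (1 + ‖x‖) ^ mf) := by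
          refine add_le_add (mul_le_mul (hfb x).1 (hgb x).2 (norm_nonneg _) (by positivity))
            (mul_le_mul (hgb x).1 (hfb x).2 (norm_nonneg _) (by positivity))
      _ = 2 * (Cf * Cg) * (1 + ‖x‖) ^ (mf + mg) := by rw [pow_add]; ring
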